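/- With g = c(y1-a)^(n+1)+i(n+1)(y2-b), h = conj(g), f = g^α h^β (α, β ∈ ℝ), away from (a,b) one has Y2(‖∇₀f‖²) = 4c³(n+1)⁴(α²+β²)(α+β-1)(y1-a)^(3n)(y2-b)(gh)^(α+β-2). -/

import Mathlib

noncomputable section
open Complex

abbrev P2 : Type := ℝ × ℝ

/-- Grushin vector field Y1 = ∂/∂y1. -/
def Y1 (u : P2 → ℂ) (q : P2) : ℂ := fderiv ℝ u q (1, 0)

/-- Grushin vector field Y2 = c (y1-a)^n ∂/∂y2. -/
def Y2 (a c : ℝ) (n : ℕ) (u : P2 → ℂ) (q : P2) : ℂ :=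
  (c : ℂ) * ((q.1 - a : ℝ) : ℂ) ^ n * fderiv ℝ u q (0, 1)

def gG (a b c : ℝ) (n : ℕ) (q : P2) : ℂ :=
  (c : ℂ) * ((q.1 - a : ℝ) : ℂ) ^ (n + 1) + Complex.I * ((n : ℂ) + 1) * ((q.2 - b : ℝ) : ℂ)

def hG (a b c : ℝ) (n : ℕ) (q : P2) : ℂ :=
  (c : ℂ) * ((q.1 - a : ℝ) : ℂ) ^ (n + 1) - Complex.I * ((n : ℂ) + 1) * ((q.2 - b : ℝ) : ℂ)

/-- Squared horizontal gradient norm of a complex-valued function. -/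
def nrm2G (a c : ℝ) (n : ℕ) (u : P2 → ℂ) (q : P2) : ℝ :=
  (Y1 u q * (starRingEnd ℂ) (Y1 u q) + Y2 a c n u q * (starRingEnd ℂ) (Y2 a c n u q)).re

def fF (a b c : ℝ) (n : ℕ) (α β : ℝ) (q : P2) : ℂ :=
  gG a b c n q ^ (α : ℂ) * hG a b c n q ^ (β : ℂ)

namespace GrAux

def GR (a b c : ℝ) (n : ℕ) (q : P2) : ℝ :=
  c ^ 2 * (q.1 - a) ^ (2 * n + 2) + ((n : ℝ) + 1) ^ 2 * (q.2 - b) ^ 2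

/-- The formula for the squared gradient norm. -/
def FRc (a b c : ℝ) (n : ℕ) (α β : ℝ) (q : P2) : ℝ :=
  2 * c ^ 2 * ((n : ℝ) + 1) ^ 2 * (α ^ 2 + β ^ 2) * (q.1 - a) ^ (2 * n) *
    GR a b c n q ^ (α + β - 1)

lemma gG_rep (a b c : ℝ) (n : ℕ) (q : P2) :
    gG a b c n q = Complex.ofReal (c * (q.1 - a) ^ (n + 1)) +
      Complex.ofReal (((n : ℝ) + 1) * (q.2 - b)) * Complex.I := by
  simp only [gG, Complex.ofReal_mul, Complex.ofReal_pow, Complex.ofReal_sub,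
    Complex.ofReal_add, Complex.ofReal_one, Complex.ofReal_natCast]
  push_cast
  ring

lemma gG_im (a b c : ℝ) (n : ℕ) (q : P2) :
    (gG a b c n q).im = ((n : ℝ) + 1) * (q.2 - b) := by
  rw [gG_rep]
  simp only [Complex.add_im, Complex.mul_im, Complex.ofReal_im, Complex.ofReal_re,
    Complex.I_im, Complex.I_re, mul_zero, mul_one, zero_add, add_zero, zero_mul]

lemma hG_eq_conj (a b c : ℝ) (n : ℕ) (q : P2) :
    hG a b c n q = (starRingEnd ℂ) (gG a b c n q) := by
  simp [gG, hG, map_add, map_mul, map_pow, Complex.conj_ofReal, Complex.conj_I]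
  ring

lemma normSq_gG (a b c : ℝ) (n : ℕ) (q : P2) :
    Complex.normSq (gG a b c n q) = GR a b c n q := by
  rw [gG_rep, Complex.normSq_add_mul_I, GR]
  ring

lemma GR_nonneg (a b c : ℝ) (n : ℕ) (q : P2) : 0 ≤ GR a b c n q := by
  rw [← normSq_gG]; exact Complex.normSq_nonneg _

lemma gh_ofReal (a b c : ℝ) (n : ℕ) (q : P2) :
    gG a b c n q * hG a b c n q = ((GR a b c n q : ℝ) : ℂ) := by
  rw [hG_eq_conj, Complex.mul_conj, normSq_gG]

lemma conj_mem_slitPlane {z : ℂ} (h : z ∈ Complex.slitPlane) :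
    (starRingEnd ℂ) z ∈ Complex.slitPlane := by
  rw [Complex.mem_slitPlane_iff] at h ⊢
  simpa using h.imp id (by simp [Complex.conj_im])

def L1 : P2 →L[ℝ] ℂ := Complex.ofRealCLM.comp (ContinuousLinearMap.fst ℝ ℝ ℝ)
def L2 : P2 →L[ℝ] ℂ := Complex.ofRealCLM.comp (ContinuousLinearMap.snd ℝ ℝ ℝ)

@[simp] lemma L1_apply (v : P2) : L1 v = (v.1 : ℂ) := rfl
@[simp] lemma L2_apply (v : P2) : L2 v = (v.2 : ℂ) := rfl

lemma hasFDerivAt_coord1 (a : ℝ) (q : P2) :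
    HasFDerivAt (fun r : P2 => ((r.1 - a : ℝ) : ℂ)) L1 q :=
  Complex.ofRealCLM.hasFDerivAt.comp q ((hasFDerivAt_fst (p := q)).sub_const a)

lemma hasFDerivAt_coord2 (b : ℝ) (q : P2) :
    HasFDerivAt (fun r : P2 => ((r.2 - b : ℝ) : ℂ)) L2 q :=
  Complex.ofRealCLM.hasFDerivAt.comp q ((hasFDerivAt_snd (p := q)).sub_const b)

lemma hasFDerivAt_gG (a b c : ℝ) (n : ℕ) (q : P2) :
    HasFDerivAt (gG a b c n)
      (((c * ((n : ℝ) + 1) * (q.1 - a) ^ n : ℝ) : ℂ) • L1 + (Complex.I * ((n : ℂ) + 1)) • L2) q := by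
  have h1 := ((hasDerivAt_pow (n + 1) (((q.1 - a : ℝ)) : ℂ)).comp_hasFDerivAt q
    (hasFDerivAt_coord1 a q)).const_mul (c : ℂ)
  have h2 := (hasFDerivAt_coord2 b q).const_mul (Complex.I * ((n : ℂ) + 1))
  refine (h1.add h2).congr_fderiv ?_
  refine ContinuousLinearMap.ext fun v => ?_
  simp only [ContinuousLinearMap.add_apply, ContinuousLinearMap.smul_apply, L1_apply, L2_apply,
    smul_eq_mul]
  push_cast
  ring

lemma hasFDerivAt_hG (a b c : ℝ) (n : ℕ) (q : P2) :
    HasFDerivAt (hG a b c n)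
      (((c * ((n : ℝ) + 1) * (q.1 - a) ^ n : ℝ) : ℂ) • L1 - (Complex.I * ((n : ℂ) + 1)) • L2) q := by
  have h1 := ((hasDerivAt_pow (n + 1) (((q.1 - a : ℝ)) : ℂ)).comp_hasFDerivAt q
    (hasFDerivAt_coord1 a q)).const_mul (c : ℂ)
  have h2 := (hasFDerivAt_coord2 b q).const_mul (Complex.I * ((n : ℂ) + 1))
  refine (h1.sub h2).congr_fderiv ?_
  refine ContinuousLinearMap.ext fun v => ?_
  simp only [ContinuousLinearMap.sub_apply, ContinuousLinearMap.add_apply,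
    ContinuousLinearMap.smul_apply, L1_apply, L2_apply, smul_eq_mul]
  push_cast
  ring

lemma rpow_abs_eq (z : ℂ) (w : ℝ) :
    ‖z‖ ^ w = Complex.normSq z ^ (w / 2) := by
  rw [Complex.norm_def, Real.sqrt_eq_rpow, ← Real.rpow_mul (Complex.normSq_nonneg z)]
  congr 1
  ring

lemma normSq_aux (z : ℂ) (hz : z ≠ 0) (γ u v : ℝ) :
    Complex.normSq ((γ : ℂ) * z ^ ((u : ℝ) : ℂ) * ((starRingEnd ℂ) z) ^ ((v : ℝ) : ℂ)) =
      γ ^ 2 * Complex.normSq z ^ (u + v) := by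
  have hn0 : 0 < Complex.normSq z := Complex.normSq_pos.mpr hz
  rw [← Complex.sq_norm, norm_mul, norm_mul, Complex.norm_real, Complex.norm_cpow_real,
    Complex.norm_cpow_real, Complex.norm_conj, rpow_abs_eq, rpow_abs_eq, mul_pow, mul_pow, Real.norm_eq_abs, _root_.sq_abs,
    ← Real.rpow_natCast (Complex.normSq z ^ (u / 2)) 2,
    ← Real.rpow_natCast (Complex.normSq z ^ (v / 2)) 2,
    ← Real.rpow_mul hn0.le, ← Real.rpow_mul hn0.le, mul_assoc, ← Real.rpow_add hn0]
  congr 1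
  push_cast
  ring

/-- Main computation: on the slit-plane region, the gradient norm is given by the formula. -/
lemma nrm2_eq (a b c : ℝ) (n : ℕ) (α β : ℝ) (q : P2)
    (hs : gG a b c n q ∈ Complex.slitPlane) :
    nrm2G a c n (fF a b c n α β) q = FRc a b c n α β q := by
  have hg0 : gG a b c n q ≠ 0 := Complex.slitPlane_ne_zero hs
  have hs' : hG a b c n q ∈ Complex.slitPlane := by
    rw [hG_eq_conj]; exact conj_mem_slitPlane hs
  have hα := (Complex.hasStrictDerivAt_cpow_const (c := (α : ℂ)) hs).hasDerivAt.comp_hasFDerivAt q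
    (hasFDerivAt_gG a b c n q)
  have hβ := (Complex.hasStrictDerivAt_cpow_const (c := (β : ℂ)) hs').hasDerivAt.comp_hasFDerivAt q
    (hasFDerivAt_hG a b c n q)
  have hf : HasFDerivAt (fF a b c n α β) _ q := hα.mul hβ
  set gQ := gG a b c n q with hgQdef
  set hQ := hG a b c n q with hhQdef
  set k : ℂ := ((c * ((n : ℝ) + 1) * (q.1 - a) ^ n : ℝ) : ℂ) with hk
  set t : ℂ := Complex.I * ((n : ℂ) + 1) with ht
  set A : ℂ := (α : ℂ) * gQ ^ ((α : ℂ) - 1) * hQ ^ (β : ℂ) with hA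
  set B : ℂ := (β : ℂ) * hQ ^ ((β : ℂ) - 1) * gQ ^ (α : ℂ) with hB
  have hY1 : fderiv ℝ (fF a b c n α β) q (1, 0) = k * (A + B) := by
    rw [hf.fderiv]
    simp only [ContinuousLinearMap.add_apply, ContinuousLinearMap.smul_apply,
      ContinuousLinearMap.sub_apply, L1_apply, L2_apply, smul_eq_mul, Function.comp]
    push_cast
    ring
  have hY2 : fderiv ℝ (fF a b c n α β) q (0, 1) = t * (A - B) := by
    rw [hf.fderiv]
    simp only [ContinuousLinearMap.add_apply, ContinuousLinearMap.smul_apply,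
      ContinuousLinearMap.sub_apply, L1_apply, L2_apply, smul_eq_mul, Function.comp]
    push_cast
    ring
  have hnA : Complex.normSq A = α ^ 2 * GR a b c n q ^ (α + β - 1) := by
    have e1 : ((α : ℂ) - 1) = (((α - 1 : ℝ) : ℝ) : ℂ) := by push_cast; ring
    have := normSq_aux gQ hg0 α (α - 1) β
    rw [hA, e1, hhQdef, hG_eq_conj, this, normSq_gG, show α - 1 + β = α + β - 1 by ring]
  have hnB : Complex.normSq B = β ^ 2 * GR a b c n q ^ (α + β - 1) := by
    have hh0 : hQ ≠ 0 := Complex.slitPlane_ne_zero hs'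
    have e1 : ((β : ℂ) - 1) = (((β - 1 : ℝ) : ℝ) : ℂ) := by push_cast; ring
    have hcc : (starRingEnd ℂ) hQ = gQ := by
      rw [hhQdef, hG_eq_conj, Complex.conj_conj]
    have := normSq_aux hQ hh0 β (β - 1) α
    rw [hB, e1, ← hcc, this, hhQdef, hG_eq_conj, Complex.normSq_conj, normSq_gG,
      show β - 1 + α = α + β - 1 by ring]
  have hpar : Complex.normSq (A + B) + Complex.normSq (A - B) =
      2 * (Complex.normSq A + Complex.normSq B) := by
    simp [Complex.normSq_apply, Complex.add_re, Complex.add_im, Complex.sub_re, Complex.sub_im]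
    ring
  have hcast : ((n : ℂ) + 1) = (((n : ℝ) + 1 : ℝ) : ℂ) := by push_cast; ring
  unfold nrm2G Y1 Y2
  rw [hY1, hY2, Complex.mul_conj, Complex.mul_conj]
  rw [← Complex.ofReal_add, Complex.ofReal_re]
  rw [hk, ht, hcast]
  rw [map_mul, map_mul, map_mul, map_mul, map_mul]
  simp only [Complex.normSq_ofReal, Complex.normSq_I, map_pow, one_mul]
  rw [FRc]
  have hpow2 : ((q.1 - a) * (q.1 - a)) ^ n = (q.1 - a) ^ n * (q.1 - a) ^ n := by rw [mul_pow]
  have hpow3 : (q.1 - a) ^ (2 * n) = (q.1 - a) ^ n * (q.1 - a) ^ n := by rw [two_mul, pow_add]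
  rw [hpow2, hpow3]
  linear_combination (c ^ 2 * ((n : ℝ) + 1) ^ 2 * ((q.1 - a) ^ n * (q.1 - a) ^ n)) * hpar +
    (2 * c ^ 2 * ((n : ℝ) + 1) ^ 2 * ((q.1 - a) ^ n * (q.1 - a) ^ n)) * hnA +
    (2 * c ^ 2 * ((n : ℝ) + 1) ^ 2 * ((q.1 - a) ^ n * (q.1 - a) ^ n)) * hnB


lemma continuous_gG (a b c : ℝ) (n : ℕ) : Continuous (gG a b c n) := by
  unfold gG
  fun_prop

/-- Derivative of the formula function, composed with `ofReal`. -/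
lemma hasFDerivAt_FRc (a b c : ℝ) (n : ℕ) (α β : ℝ) (q : P2) (h0 : GR a b c n q ≠ 0) :
    HasFDerivAt (fun r : P2 => ((FRc a b c n α β r : ℝ) : ℂ))
      (Complex.ofRealCLM.comp
        (((2 * c ^ 2 * ((n : ℝ) + 1) ^ 2 * (α ^ 2 + β ^ 2) * (q.1 - a) ^ (2 * n)) •
            (((α + β - 1) * GR a b c n q ^ (α + β - 1 - 1)) •
              ((c ^ 2 • ((↑(2 * n + 2) * (q.1 - a) ^ (2 * n + 2 - 1)) •
                  (ContinuousLinearMap.fst ℝ ℝ ℝ))) +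
               (((n : ℝ) + 1) ^ 2 • ((↑(2 : ℕ) * (q.2 - b) ^ (2 - 1)) •
                  (ContinuousLinearMap.snd ℝ ℝ ℝ)))))) +
          (GR a b c n q ^ (α + β - 1)) •
            ((2 * c ^ 2 * ((n : ℝ) + 1) ^ 2 * (α ^ 2 + β ^ 2)) •
              ((↑(2 * n) * (q.1 - a) ^ (2 * n - 1)) • (ContinuousLinearMap.fst ℝ ℝ ℝ))))) q := by
  have hGR : HasFDerivAt (GR a b c n)
      ((c ^ 2 • ((↑(2 * n + 2) * (q.1 - a) ^ (2 * n + 2 - 1)) • (ContinuousLinearMap.fst ℝ ℝ ℝ))) +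
       (((n : ℝ) + 1) ^ 2 • ((↑(2 : ℕ) * (q.2 - b) ^ (2 - 1)) • (ContinuousLinearMap.snd ℝ ℝ ℝ)))) q := by
    exact (((hasDerivAt_pow (2 * n + 2) (q.1 - a)).comp_hasFDerivAt q
        ((hasFDerivAt_fst (p := q)).sub_const a)).const_mul (c ^ 2)).add
      (((hasDerivAt_pow 2 (q.2 - b)).comp_hasFDerivAt q
        ((hasFDerivAt_snd (p := q)).sub_const b)).const_mul (((n : ℝ) + 1) ^ 2))
  have hrpow := (Real.hasStrictDerivAt_rpow_const_of_ne h0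
    (α + β - 1)).hasDerivAt.comp_hasFDerivAt q hGR
  have hP : HasFDerivAt (fun r : P2 =>
      2 * c ^ 2 * ((n : ℝ) + 1) ^ 2 * (α ^ 2 + β ^ 2) * (r.1 - a) ^ (2 * n))
      ((2 * c ^ 2 * ((n : ℝ) + 1) ^ 2 * (α ^ 2 + β ^ 2)) •
        ((↑(2 * n) * (q.1 - a) ^ (2 * n - 1)) • (ContinuousLinearMap.fst ℝ ℝ ℝ))) q :=
    ((hasDerivAt_pow (2 * n) (q.1 - a)).comp_hasFDerivAt q
      ((hasFDerivAt_fst (p := q)).sub_const a)).const_mul _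
  exact Complex.ofRealCLM.hasFDerivAt.comp q (hP.mul hrpow)

/-- The good case. -/
lemma good_case (a b c : ℝ) (n : ℕ) (α β : ℝ) (q : P2)
    (hs : gG a b c n q ∈ Complex.slitPlane) :
    Y2 a c n (fun r => ((nrm2G a c n (fF a b c n α β) r : ℝ) : ℂ)) q =
      4 * (c : ℂ) ^ 3 * ((n : ℂ) + 1) ^ 4 * ((α : ℂ) ^ 2 + (β : ℂ) ^ 2) *
        ((α : ℂ) + (β : ℂ) - 1) * ((q.1 - a : ℝ) : ℂ) ^ (3 * n) * ((q.2 - b : ℝ) : ℂ) *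
        (gG a b c n q * hG a b c n q) ^ ((α : ℂ) + (β : ℂ) - 2) := by
  have hg0 : gG a b c n q ≠ 0 := Complex.slitPlane_ne_zero hs
  have hGR0 : GR a b c n q ≠ 0 := by
    rw [← normSq_gG]; exact fun h => hg0 (Complex.normSq_eq_zero.mp h)
  have hev : (fun r => ((nrm2G a c n (fF a b c n α β) r : ℝ) : ℂ)) =ᶠ[nhds q]
      (fun r => ((FRc a b c n α β r : ℝ) : ℂ)) := by
    filter_upwards [(continuous_gG a b c n).continuousAt.eventually_mem
      (Complex.isOpen_slitPlane.mem_nhds hs)] with r hr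
    rw [nrm2_eq a b c n α β r hr]
  unfold Y2
  rw [hev.fderiv_eq, (hasFDerivAt_FRc a b c n α β q hGR0).fderiv]
  rw [gh_ofReal, show (α : ℂ) + (β : ℂ) - 2 = (((α + β - 2 : ℝ) : ℝ) : ℂ) by push_cast; ring,
    ← Complex.ofReal_cpow (GR_nonneg a b c n q)]
  simp only [ContinuousLinearMap.comp_apply, ContinuousLinearMap.add_apply,
    ContinuousLinearMap.smul_apply, ContinuousLinearMap.coe_fst', ContinuousLinearMap.coe_snd',
    Complex.ofRealCLM_apply, smul_eq_mul]
  rw [show α + β - 1 - 1 = α + β - 2 by ring]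
  push_cast
  rw [show (3 : ℕ) * n = n + (n + n) by ring, pow_add, pow_add]
  ring

/-- The bad case: on the branch cut, both sides vanish. -/
lemma bad_case (a b c : ℝ) (n : ℕ) (α β : ℝ) (q : P2)
    (hs : gG a b c n q ∉ Complex.slitPlane) :
    Y2 a c n (fun r => ((nrm2G a c n (fF a b c n α β) r : ℝ) : ℂ)) q =
      4 * (c : ℂ) ^ 3 * ((n : ℂ) + 1) ^ 4 * ((α : ℂ) ^ 2 + (β : ℂ) ^ 2) *
        ((α : ℂ) + (β : ℂ) - 1) * ((q.1 - a : ℝ) : ℂ) ^ (3 * n) * ((q.2 - b : ℝ) : ℂ) *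
        (gG a b c n q * hG a b c n q) ^ ((α : ℂ) + (β : ℂ) - 2) := by
  set N : P2 → ℂ := fun r => ((nrm2G a c n (fF a b c n α β) r : ℝ) : ℂ) with hN
  rw [Complex.mem_slitPlane_iff] at hs
  push_neg at hs
  have hb : q.2 = b := by
    have him := hs.2
    rw [gG_im] at him
    have hn1 : ((n : ℝ) + 1) ≠ 0 := by positivity
    have := mul_eq_zero.mp him
    rcases this with h | h
    · exact absurd h hn1
    · linarith
  have hRHS : ((q.2 - b : ℝ) : ℂ) = 0 := by rw [hb]; simp
  rw [hRHS]
  rw [show (4 : ℂ) * (c : ℂ) ^ 3 * ((n : ℂ) + 1) ^ 4 * ((α : ℂ) ^ 2 + (β : ℂ) ^ 2) *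
        ((α : ℂ) + (β : ℂ) - 1) * ((q.1 - a : ℝ) : ℂ) ^ (3 * n) * 0 *
        (gG a b c n q * hG a b c n q) ^ ((α : ℂ) + (β : ℂ) - 2) = 0 by ring]
  unfold Y2
  by_cases hdiff : DifferentiableAt ℝ N q
  · set d : ℂ := fderiv ℝ N q (0, 1) with hd
    set φ : ℝ → ℂ := fun t => N (q.1, b + t) with hφ
    have heven : ∀ t : ℝ, φ (-t) = φ t := by
      intro t
      rcases eq_or_ne t 0 with h | h
      · simp [h]
      have hmem : ∀ s : ℝ, s ≠ 0 → gG a b c n (q.1, b + s) ∈ Complex.slitPlane := by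
        intro s hsne
        rw [Complex.mem_slitPlane_iff]
        right
        rw [gG_im]
        have hn1 : ((n : ℝ) + 1) ≠ 0 := by positivity
        simp only []
        intro hcon
        rcases mul_eq_zero.mp hcon with h' | h'
        · exact hn1 h'
        · apply hsne; linarith [h']
      have h1 := hmem t h
      have h2 := hmem (-t) (neg_ne_zero.mpr h)
      have hGReq : GR a b c n (q.1, b + -t) = GR a b c n (q.1, b + t) := by
        unfold GR; ring_nf
      show N (q.1, b + -t) = N (q.1, b + t)
      rw [hN]
      simp only []
      rw [nrm2_eq a b c n α β _ h2, nrm2_eq a b c n α β _ h1]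
      unfold FRc
      rw [hGReq]
    have hpt : ((q.1, b + (0 : ℝ)) : P2) = q := by
      rw [add_zero, ← hb]
    have hγ : HasDerivAt (fun t : ℝ => ((q.1, b + t) : P2)) (((0 : ℝ), (1 : ℝ)) : P2) 0 :=
      HasDerivAt.prodMk (hasDerivAt_const (0 : ℝ) q.1) ((hasDerivAt_id (0 : ℝ)).const_add b)
    have hNq : HasFDerivAt N (fderiv ℝ N q) ((fun t : ℝ => ((q.1, b + t) : P2)) 0) := by
      rw [show (fun t : ℝ => ((q.1, b + t) : P2)) 0 = q from hpt]
      exact hdiff.hasFDerivAt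
    have hD : HasDerivAt φ d 0 :=
      HasFDerivAt.comp_hasDerivAt (l := N) (f := fun t : ℝ => ((q.1, b + t) : P2)) (x := 0)
        hNq hγ
    have hneg : HasDerivAt (fun t : ℝ => -t) (-1 : ℝ) 0 := (hasDerivAt_id 0).neg
    have hD2 : HasDerivAt (fun t => φ (-t)) (-d) 0 := by
      have hD' : HasDerivAt φ d ((fun t : ℝ => -t) 0) := by
        rw [show (fun t : ℝ => -t) 0 = 0 by simp]
        exact hD
      have := hD'.scomp 0 hneg
      simp only [neg_one_smul] at this
      exact this
    have hφeq : (fun t => φ (-t)) = φ := funext heven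
    rw [hφeq] at hD2
    have hdd : d = -d := hD.unique hD2
    have hd0 : d = 0 := by linear_combination hdd / 2
    rw [hd0, mul_zero]
  · rw [fderiv_zero_of_not_differentiableAt hdiff]
    simp

end GrAux


theorem grushin_Y2_gradient_norm_sq (a b c : ℝ) (hc : c ≠ 0) (n : ℕ) (α β : ℝ)
    (q : P2) (hq : q ≠ (a, b)) :
    Y2 a c n (fun r => ((nrm2G a c n (fF a b c n α β) r : ℝ) : ℂ)) q =
      4 * (c : ℂ) ^ 3 * ((n : ℂ) + 1) ^ 4 * ((α : ℂ) ^ 2 + (β : ℂ) ^ 2) *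
        ((α : ℂ) + (β : ℂ) - 1) * ((q.1 - a : ℝ) : ℂ) ^ (3 * n) * ((q.2 - b : ℝ) : ℂ) *
        (gG a b c n q * hG a b c n q) ^ ((α : ℂ) + (β : ℂ) - 2) := by
  by_cases hs : gG a b c n q ∈ Complex.slitPlane
  · exact GrAux.good_case a b c n α β q hs
  · exact GrAux.bad_case a b c n α β q hs
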